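/- Writing γ = k²β with k ≥ 1 and β > 1, the function r(k) = log(βk² − 1) − log(β − 1) − (2βk/(βk − 1))·log k is nonnegative for all k ≥ 1. -/

import Mathlib

open Real Set

lemma aux_mono (f f' : ℝ → ℝ)
    (hd : ∀ y : ℝ, 1 < y → HasDerivAt f (f' y) y)
    (hc : ContinuousOn f (Set.Ici 1))
    (h0 : ∀ y : ℝ, 1 < y → 0 ≤ f' y)
    (x : ℝ) (hx : 1 ≤ x) : f 1 ≤ f x := by
  have key : MonotoneOn f (Set.Ici 1) := by
    apply monotoneOn_of_deriv_nonneg (convex_Ici 1) hc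
    · intro y hy
      rw [interior_Ici] at hy
      exact ((hd y hy).differentiableAt).differentiableWithinAt
    · intro y hy
      rw [interior_Ici] at hy
      rw [(hd y hy).deriv]
      exact h0 y hy
  exact key (by simp) (by simpa using hx) hx

lemma aux1 (x : ℝ) (hx : 1 ≤ x) : 2 * x * Real.log x ≤ x ^ 2 - 1 := by
  have h := aux_mono (fun y => y ^ 2 - 1 - 2 * y * Real.log y)
    (fun y => 2 * y - (2 * Real.log y + 2 * y * (1 / y)))
    (by
      intro y hy
      have hy0 : y ≠ 0 := by linarith
      have h1 : HasDerivAt (fun y : ℝ => y ^ 2 - 1) (2 * y) y := by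
        simpa using ((hasDerivAt_pow 2 y).sub_const 1)
      have h2 : HasDerivAt (fun y : ℝ => 2 * y * Real.log y)
          (2 * Real.log y + 2 * y * (1 / y)) y := by
        have : HasDerivAt (fun y : ℝ => 2 * y * Real.log y) (2 * 1 * Real.log y + 2 * y * y⁻¹) y :=
          ((hasDerivAt_id' y).const_mul 2).mul (Real.hasDerivAt_log hy0)
        convert this using 1
        ring
      exact h1.sub h2)
    (by
      apply ContinuousOn.sub
      · fun_prop
      · apply ContinuousOn.mul (by fun_prop)
        intro y hy
        exact (Real.continuousAt_log (by simp at hy; linarith)).continuousWithinAt)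
    (by
      intro y hy
      have hlog : Real.log y ≤ y - 1 := Real.log_le_sub_one_of_pos (by linarith)
      show 0 ≤ 2 * y - (2 * Real.log y + 2 * y * (1 / y))
      have hyy : y * (1 / y) = 1 := by field_simp
      nlinarith)
    x hx
  simp only [Real.log_one] at h
  nlinarith [h]

lemma aux2 (x : ℝ) (hx : 1 ≤ x) : 2 * (x - 1) ≤ (x + 1) * Real.log x := by
  have h := aux_mono (fun y => (y + 1) * Real.log y - 2 * (y - 1))
    (fun y => (Real.log y + (y + 1) * (1 / y)) - 2)
    (by
      intro y hy
      have hy0 : y ≠ 0 := by linarith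
      have h2 : HasDerivAt (fun y : ℝ => (y + 1) * Real.log y)
          (Real.log y + (y + 1) * (1 / y)) y := by
        have : HasDerivAt (fun y : ℝ => (y + 1) * Real.log y) (1 * Real.log y + (y + 1) * y⁻¹) y :=
          ((hasDerivAt_id' y).add_const 1).mul (Real.hasDerivAt_log hy0)
        convert this using 1
        ring
      have h3 : HasDerivAt (fun y : ℝ => (y + 1) * Real.log y - 2 * (y - 1))
          (Real.log y + (y + 1) * (1 / y) - 2 * 1) y :=
        h2.sub (((hasDerivAt_id' y).sub_const 1).const_mul 2)
      simpa using h3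
    )
    (by
      apply ContinuousOn.sub
      · apply ContinuousOn.mul (by fun_prop)
        intro y hy
        exact (Real.continuousAt_log (by simp at hy; linarith)).continuousWithinAt
      · fun_prop)
    (by
      intro y hy
      have hy0 : 0 < y := by linarith
      have hlog : Real.log (1 / y) ≤ 1 / y - 1 :=
        Real.log_le_sub_one_of_pos (by positivity)
      rw [Real.log_div one_ne_zero (by linarith)] at hlog
      simp only [Real.log_one] at hlog
      show 0 ≤ Real.log y + (y + 1) * (1 / y) - 2
      have hyy : (y + 1) * (1 / y) = 1 + 1 / y := by field_simp
      rw [hyy]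
      linarith)
    x hx
  simp only [Real.log_one] at h
  nlinarith [h]

theorem stmt_2 (β k : ℝ) (hβ : 1 < β) (hk : 1 ≤ k) :
    0 ≤ Real.log (β * k ^ 2 - 1) - Real.log (β - 1) - (2 * β * k / (β * k - 1)) * Real.log k := by
  have hk0 : (0:ℝ) < k := by linarith
  have hb1 : (0:ℝ) < β - 1 := by linarith
  have hD2 : (0:ℝ) < β * k - 1 := by nlinarith
  have hN : (0:ℝ) < β * k ^ 2 - 1 := by nlinarith
  have hM : (0:ℝ) < (β - 1) * k ^ 2 := by positivity
  have hD1 : (0:ℝ) < (2 * β - 1) * k ^ 2 - 1 := by nlinarith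
  set A := Real.log (β * k ^ 2 - 1) with hA
  set B := Real.log (β - 1) with hB
  set L := Real.log k with hL
  have hL0 : 0 ≤ L := Real.log_nonneg hk
  -- log of the ratio
  have hv1 : 1 ≤ (β * k ^ 2 - 1) / ((β - 1) * k ^ 2) := by
    rw [le_div_iff₀ hM]
    nlinarith
  have hlogv : Real.log ((β * k ^ 2 - 1) / ((β - 1) * k ^ 2)) = A - B - 2 * L := by
    rw [Real.log_div hN.ne' hM.ne', Real.log_mul hb1.ne' (by positivity), Real.log_pow]
    push_cast
    ring
  have h1 : 2 * (k ^ 2 - 1) ≤ ((2 * β - 1) * k ^ 2 - 1) * (A - B - 2 * L) := by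
    have h2 := aux2 _ hv1
    rw [hlogv] at h2
    rw [div_sub_one hM.ne', div_add_one hM.ne', div_mul_eq_mul_div, le_div_iff₀ hM] at h2
    have hcancel : (β * k ^ 2 - 1 - (β - 1) * k ^ 2) = k ^ 2 - 1 := by ring
    have hcancel2 : (β * k ^ 2 - 1 + (β - 1) * k ^ 2) = (2 * β - 1) * k ^ 2 - 1 := by ring
    rw [hcancel, hcancel2, mul_assoc, div_mul_cancel₀ _ hM.ne'] at h2
    exact h2
  have h2' : 2 * k * L ≤ k ^ 2 - 1 := aux1 k hk
  have goal' : 2 * β * k * L ≤ (A - B) * (β * k - 1) := by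
    nlinarith [mul_le_mul_of_nonneg_right h1 (mul_nonneg hk0.le hD2.le),
      mul_le_mul_of_nonneg_right h2' hD1.le,
      mul_nonneg (mul_nonneg (by nlinarith : (0:ℝ) ≤ k ^ 2 - 1) (sq_nonneg (k - 1))) hk0.le,
      mul_pos hk0 hD1, hL0]
  have final : 2 * β * k / (β * k - 1) * L ≤ A - B := by
    rw [div_mul_eq_mul_div, div_le_iff₀ hD2]
    linarith [goal']
  linarith [final]
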